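/- Let G = H ≀_I K = (⊕_I H) ⋊ K be a generalized wreath product, where H is a non-abelian simple group, K acts faithfully and transitively on a non-empty set I. Then every non-trivial normal subgroup N of G contains ⊕_I H; consequently N = (⊕_I H) ⋊ K₀ for some normal subgroup K₀ of K. -/

import Mathlib

noncomputable section

variable (K I H : Type*) [Group K] [Group H] [MulAction K I]

/-- The action of `K` on `I → H` by permuting coordinates via the action on `I`. -/
def wreathAct : K →* MulAut (I → H) where
  toFun k := MulEquiv.arrowCongr (MulAction.toPerm k) (MulEquiv.refl H)
  map_one' := by
    refine MulEquiv.ext fun f => funext fun i => ?_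
    show f ((1 : K)⁻¹ • i) = f i
    simp
  map_mul' a b := by
    refine MulEquiv.ext fun f => funext fun i => ?_
    show f ((a * b)⁻¹ • i) = f (b⁻¹ • a⁻¹ • i)
    rw [mul_inv_rev, mul_smul]

/-- The full (unrestricted) wreath product `(I → H) ⋊ K`. -/
abbrev FullWreath : Type _ := SemidirectProduct (I → H) K (wreathAct K I H)

/-- The generalized wreath product `H ≀_I K = (⊕_I H) ⋊ K`: the subgroup of the
full wreath product of elements whose base component is finitely supported. -/
def RestrictedWreath : Subgroup (FullWreath K I H) where
  carrier := {x | (Function.mulSupport x.left).Finite}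
  one_mem' := by simp [SemidirectProduct.one_left]
  mul_mem' := by
    intro a b ha hb
    have h1 : (a * b).left = a.left * wreathAct K I H a.right b.left := rfl
    have h2 : Function.mulSupport (wreathAct K I H a.right b.left) =
        (fun i : I => a.right⁻¹ • i) ⁻¹' Function.mulSupport b.left := rfl
    show (Function.mulSupport (a * b).left).Finite
    rw [h1]
    refine Set.Finite.subset (Set.Finite.union ha ?_) (Function.mulSupport_mul _ _)
    rw [h2]
    exact hb.preimage (MulAction.injective _).injOn
  inv_mem' := by
    intro a ha
    have h2 : Function.mulSupport (a⁻¹).left =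
        (fun i : I => (a.right⁻¹)⁻¹ • i) ⁻¹' Function.mulSupport a.left⁻¹ := rfl
    show (Function.mulSupport (a⁻¹).left).Finite
    rw [h2, Function.mulSupport_inv]
    exact ha.preimage (MulAction.injective _).injOn

/-- The copy of `⊕_I H` inside the generalized wreath product. -/
def baseSubgroup : Subgroup ↥(RestrictedWreath K I H) where
  carrier := {x | (x : FullWreath K I H).right = 1}
  one_mem' := rfl
  mul_mem' := by
    intro a b ha hb
    show ((a : FullWreath K I H) * b).right = 1
    rw [SemidirectProduct.mul_right]
    simp only [Set.mem_setOf_eq] at ha hb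
    rw [ha, hb, mul_one]
  inv_mem' := by
    intro a ha
    show ((a : FullWreath K I H)⁻¹).right = 1
    rw [SemidirectProduct.inv_right]
    simp only [Set.mem_setOf_eq] at ha
    rw [ha, inv_one]

namespace WreathProofAux

open Function
open scoped Classical

variable {K I H}

lemma act_apply (k : K) (f : I → H) (i : I) : wreathAct K I H k f i = f (k⁻¹ • i) := rfl

lemma mulSupport_single_finite (i : I) (h : H) :
    (mulSupport (Pi.mulSingle i h : I → H)).Finite := by
  refine (Set.finite_singleton i).subset fun j hj => ?_
  simp only [Set.mem_singleton_iff]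
  by_contra hne
  exact hj (Function.update_of_ne hne _ _)

/-- Build an element of the restricted wreath product. -/
def elt (f : I → H) (hf : (mulSupport f).Finite) (k : K) : ↥(RestrictedWreath K I H) :=
  ⟨⟨f, k⟩, hf⟩

@[simp] lemma elt_coe_left (f : I → H) (hf) (k : K) :
    ((elt f hf k : ↥(RestrictedWreath K I H)) : FullWreath K I H).left = f := rfl

@[simp] lemma elt_coe_right (f : I → H) (hf) (k : K) :
    ((elt f hf k : ↥(RestrictedWreath K I H)) : FullWreath K I H).right = k := rfl

/-- Extensionality for elements of the restricted wreath product. -/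
lemma rw_ext {a b : ↥(RestrictedWreath K I H)}
    (hl : (a : FullWreath K I H).left = (b : FullWreath K I H).left)
    (hr : (a : FullWreath K I H).right = (b : FullWreath K I H).right) : a = b :=
  Subtype.ext (SemidirectProduct.ext hl hr)

/-- The element of the base supported at `i` with value `h`. -/
def single (i : I) (h : H) : ↥(RestrictedWreath K I H) :=
  elt (Pi.mulSingle i h) (mulSupport_single_finite i h) 1

@[simp] lemma coe_mul (a b : ↥(RestrictedWreath K I H)) :
    ((a * b : ↥(RestrictedWreath K I H)) : FullWreath K I H) = (a : FullWreath K I H) * b := rfl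

@[simp] lemma coe_inv (a : ↥(RestrictedWreath K I H)) :
    ((a⁻¹ : ↥(RestrictedWreath K I H)) : FullWreath K I H) = (a : FullWreath K I H)⁻¹ := rfl

lemma mul_left_of_right_one {a b : ↥(RestrictedWreath K I H)}
    (ha : (a : FullWreath K I H).right = 1) :
    ((a * b : ↥(RestrictedWreath K I H)) : FullWreath K I H).left
      = (a : FullWreath K I H).left * (b : FullWreath K I H).left := by
  rw [coe_mul, SemidirectProduct.mul_left, ha, map_one]
  rfl

lemma single_right (i : I) (h : H) :
    ((single i h : ↥(RestrictedWreath K I H)) : FullWreath K I H).right = 1 := rfl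

lemma single_left (i : I) (h : H) :
    ((single i h : ↥(RestrictedWreath K I H)) : FullWreath K I H).left = Pi.mulSingle i h := rfl

lemma inv_left_of_right_one {b : ↥(RestrictedWreath K I H)}
    (hb : (b : FullWreath K I H).right = 1) :
    ((b⁻¹ : ↥(RestrictedWreath K I H)) : FullWreath K I H).left
      = ((b : FullWreath K I H).left)⁻¹ := by
  rw [coe_inv, SemidirectProduct.inv_left, hb, inv_one, map_one]
  rfl

lemma conj_base_right (x b : ↥(RestrictedWreath K I H))
    (hb : (b : FullWreath K I H).right = 1) :
    ((x * b * x⁻¹ : ↥(RestrictedWreath K I H)) : FullWreath K I H).right = 1 := by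
  simp [coe_mul, coe_inv, SemidirectProduct.mul_right, SemidirectProduct.inv_right, hb]

lemma conj_base_left (x b : ↥(RestrictedWreath K I H))
    (hb : (b : FullWreath K I H).right = 1) (j : I) :
    ((x * b * x⁻¹ : ↥(RestrictedWreath K I H)) : FullWreath K I H).left j
      = (x : FullWreath K I H).left j
          * (b : FullWreath K I H).left ((x : FullWreath K I H).right⁻¹ • j)
          * ((x : FullWreath K I H).left j)⁻¹ := by
  rw [coe_mul, coe_mul, coe_inv, SemidirectProduct.mul_left, SemidirectProduct.mul_left,
    SemidirectProduct.inv_left, SemidirectProduct.mul_right, hb, mul_one]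
  simp only [Pi.mul_apply, act_apply, Pi.inv_apply, inv_smul_smul]

/-- Projection of the restricted wreath product onto `K`. -/
def projK : ↥(RestrictedWreath K I H) →* K where
  toFun x := (x : FullWreath K I H).right
  map_one' := rfl
  map_mul' a b := SemidirectProduct.mul_right (a : FullWreath K I H) (b : FullWreath K I H)

@[simp] lemma projK_apply (x : ↥(RestrictedWreath K I H)) :
    projK x = (x : FullWreath K I H).right := rfl

/-- The embedding `H →* H ≀_I K` at coordinate `i`. -/
def singleHom (i : I) : H →* ↥(RestrictedWreath K I H) where
  toFun h := single i h
  map_one' := by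
    refine rw_ext ?_ rfl
    rw [single_left]
    rw [Pi.mulSingle_one]
    rfl
  map_mul' a b := by
    refine rw_ext ?_ (by simp [coe_mul, SemidirectProduct.mul_right, single_right])
    rw [mul_left_of_right_one (single_right i a), single_left, single_left, single_left,
      Pi.mulSingle_mul]

end WreathProofAux
open WreathProofAux Function in
open scoped Classical in
/-- Every non-trivial normal subgroup of `H ≀_I K` contains `⊕_I H`, and equals
`(⊕_I H) ⋊ K₀` for some normal subgroup `K₀` of `K`. -/
theorem base_le_of_normal_nontrivial
    [FaithfulSMul K I] [MulAction.IsPretransitive K I] [Nonempty I]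
    [IsSimpleGroup H] (hH : ∃ a b : H, a * b ≠ b * a)
    (N : Subgroup ↥(RestrictedWreath K I H)) (hN : N.Normal) (hNne : N ≠ ⊥) :
    baseSubgroup K I H ≤ N ∧
      ∃ K₀ : Subgroup K, K₀.Normal ∧
        ∀ x : ↥(RestrictedWreath K I H), x ∈ N ↔ (x : FullWreath K I H).right ∈ K₀ := by
  -- Step 1: `N` contains a non-trivial element of the base.
  have step1 : ∃ n ∈ N, (n : FullWreath K I H).right = 1 ∧
      (n : FullWreath K I H).left ≠ 1 := by
    obtain ⟨⟨x, hxN⟩, hx1'⟩ := Subgroup.ne_bot_iff_exists_ne_one.mp hNne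
    have hx1 : x ≠ 1 := fun h => hx1' (Subtype.ext h)
    by_cases hk : (x : FullWreath K I H).right = 1
    · refine ⟨x, hxN, hk, fun hL => hx1 (rw_ext ?_ ?_)⟩
      · rw [hL]; rfl
      · rw [hk]; rfl
    · obtain ⟨i, hi⟩ : ∃ i : I, (x : FullWreath K I H).right • i ≠ i := by
        by_contra hall
        push_neg at hall
        exact hk (FaithfulSMul.eq_of_smul_eq_smul fun i => by rw [hall i, one_smul])
      obtain ⟨h, hh⟩ := exists_ne (1 : H)
      set δ : ↥(RestrictedWreath K I H) := single i h with hδ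
      refine ⟨x * δ * x⁻¹ * δ⁻¹, ?_, ?_, ?_⟩
      · have h1 : δ * x⁻¹ * δ⁻¹ ∈ N := hN.conj_mem _ (inv_mem hxN) δ
        have := mul_mem hxN h1
        simpa [mul_assoc] using this
      · rw [coe_mul, SemidirectProduct.mul_right, conj_base_right x δ (single_right i h),
          coe_inv, SemidirectProduct.inv_right, single_right, inv_one, one_mul]
      · intro hL
        have hc := congrFun hL ((x : FullWreath K I H).right • i)
        rw [mul_left_of_right_one (conj_base_right x δ (single_right i h)),
          Pi.mul_apply, conj_base_left x δ (single_right i h),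
          inv_left_of_right_one (single_right i h)] at hc
        simp only [hδ, single_left, Pi.inv_apply, inv_smul_smul, Pi.one_apply] at hc
        simp only [Pi.mulSingle_eq_same, Pi.mulSingle_eq_of_ne hi, inv_one, mul_one,
          mul_inv_eq_one] at hc
        exact hh (mul_left_cancel (hc.trans (mul_one _).symm))
  -- Step 2: `N` contains a non-trivial one-coordinate element.
  obtain ⟨n, hnN, hnr, hnl⟩ := step1
  obtain ⟨s₀, hs₀⟩ : ∃ s₀ : I, (n : FullWreath K I H).left s₀ ≠ 1 := Function.ne_iff.mp hnl
  set h₀ := (n : FullWreath K I H).left s₀ with hh₀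
  have hcomm : ∃ a : H, a * h₀ * a⁻¹ * h₀⁻¹ ≠ 1 := by
    rcases (inferInstance : (Subgroup.center H).Normal).eq_bot_or_eq_top with hc | hc
    · by_contra hall
      push_neg at hall
      have hmem : h₀ ∈ Subgroup.center H := Subgroup.mem_center_iff.mpr fun a => by
        have h1 : a * h₀ * a⁻¹ = h₀ := by rw [← mul_inv_eq_one]; exact hall a
        calc a * h₀ = a * h₀ * a⁻¹ * a := by group
          _ = h₀ * a := by rw [h1]
      rw [hc] at hmem
      exact hs₀ (Subgroup.mem_bot.mp hmem)
    · obtain ⟨a, b, hab⟩ := hH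
      have hb : b ∈ Subgroup.center H := by rw [hc]; trivial
      exact absurd (Subgroup.mem_center_iff.mp hb a) hab
  obtain ⟨a, ha⟩ := hcomm
  set c := a * h₀ * a⁻¹ * h₀⁻¹ with hcdef
  have hmN : single s₀ c ∈ N := by
    have hmem : single s₀ a * n * (single s₀ a)⁻¹ * n⁻¹ ∈ N :=
      mul_mem (hN.conj_mem n hnN _) (inv_mem hnN)
    have heq : single s₀ a * n * (single s₀ a)⁻¹ * n⁻¹ = single s₀ c := by
      refine rw_ext ?_ ?_
      · funext j
        rw [mul_left_of_right_one (conj_base_right _ n (by exact hnr)), Pi.mul_apply,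
          conj_base_left _ n (by exact hnr), inv_left_of_right_one (by exact hnr)]
        simp only [single_left, single_right, inv_one, one_smul, Pi.inv_apply]
        rcases eq_or_ne j s₀ with rfl | hj
        · simp only [Pi.mulSingle_eq_same]
          rfl
        · simp only [Pi.mulSingle_eq_of_ne hj]
          group
      · simp only [coe_mul, coe_inv, SemidirectProduct.mul_right, SemidirectProduct.inv_right,
          hnr, single_right, inv_one, mul_one, one_mul]
    rw [← heq]
    exact hmem
  -- Step 3: all single elements at `s₀` belong to `N`.
  have hS : ∀ h : H, single s₀ h ∈ N := by
    have hSnormal : (Subgroup.comap (singleHom s₀ : H →* ↥(RestrictedWreath K I H)) N).Normal := by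
      constructor
      intro p hp g
      simp only [Subgroup.mem_comap] at hp ⊢
      rw [map_mul, map_mul, map_inv]
      exact hN.conj_mem _ hp _
    haveI := hSnormal
    rcases hSnormal.eq_bot_or_eq_top with hc | hc
    · exfalso
      have hcc : c ∈ Subgroup.comap (singleHom s₀ : H →* ↥(RestrictedWreath K I H)) N :=
        Subgroup.mem_comap.mpr hmN
      rw [hc] at hcc
      exact ha (Subgroup.mem_bot.mp hcc)
    · intro h
      have : h ∈ Subgroup.comap (singleHom s₀ : H →* ↥(RestrictedWreath K I H)) N := by
        rw [hc]; trivial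
      exact Subgroup.mem_comap.mp this
  have hone : (Function.mulSupport (1 : I → H)).Finite := by
    rw [Function.mulSupport_eq_empty_iff.mpr rfl]; exact Set.finite_empty
  -- Step 4: by transitivity, all single elements belong to `N`.
  have hall : ∀ (i : I) (h : H), single i h ∈ N := by
    intro i h
    obtain ⟨k, hk⟩ := MulAction.exists_smul_eq K s₀ i
    subst hk
    set κ : ↥(RestrictedWreath K I H) := elt 1 hone k with hκ
    have heq : κ * single s₀ h * κ⁻¹ = single (k • s₀) h := by
      refine rw_ext ?_ ?_
      · funext j
        rw [conj_base_left κ _ (single_right s₀ h)]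
        simp only [hκ, elt_coe_left, elt_coe_right, Pi.one_apply, single_left, one_mul,
          inv_one, mul_one]
        rcases eq_or_ne j (k • s₀) with rfl | hj
        · rw [inv_smul_smul]
          simp only [Pi.mulSingle_eq_same]
        · have hj2 : k⁻¹ • j ≠ s₀ := fun hcon => hj (by rw [← hcon, smul_inv_smul])
          simp only [Pi.mulSingle_eq_of_ne hj2, Pi.mulSingle_eq_of_ne hj]
      · simp [hκ, coe_mul, coe_inv, SemidirectProduct.mul_right, SemidirectProduct.inv_right,
          single_right]
    rw [← heq]
    exact hN.conj_mem _ (hS h) κ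
  -- Step 5: the whole base is contained in `N`.
  have hbase_le : baseSubgroup K I H ≤ N := by
    have key : ∀ s : Finset I, ∀ x : ↥(RestrictedWreath K I H),
        (x : FullWreath K I H).right = 1 →
        Function.mulSupport (x : FullWreath K I H).left ⊆ ↑s → x ∈ N := by
      intro s
      induction s using Finset.induction_on with
      | empty =>
        intro x hr hsupp
        have hx : x = 1 := by
          refine rw_ext ?_ hr
          funext j
          by_contra hj
          simpa using hsupp hj
        rw [hx]; exact one_mem N
      | @insert i s hi ih =>
        intro x hr hsupp
        have hfin : (Function.mulSupport (x : FullWreath K I H).left).Finite := x.2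
        have hfin2 : (Function.mulSupport
            (Function.update (x : FullWreath K I H).left i 1)).Finite := by
          refine hfin.subset fun j hj => ?_
          rcases eq_or_ne j i with rfl | hne
          · rw [Function.mem_mulSupport, Function.update_self] at hj
            exact absurd rfl hj
          · rwa [Function.mem_mulSupport, Function.update_of_ne hne,
              ← Function.mem_mulSupport] at hj
        have hxeq : x = single i ((x : FullWreath K I H).left i)
            * elt (Function.update (x : FullWreath K I H).left i 1) hfin2 1 := by
          refine rw_ext ?_ ?_
          · rw [mul_left_of_right_one (single_right _ _)]
            funext j
            simp only [single_left, elt_coe_left, Pi.mul_apply]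
            rcases eq_or_ne j i with rfl | hne
            · rw [Pi.mulSingle_eq_same, Function.update_self, mul_one]
            · simp only [Pi.mulSingle_eq_of_ne hne, Function.update_of_ne hne, one_mul]
          · simp only [hr, coe_mul, SemidirectProduct.mul_right, single_right, elt_coe_right,
              mul_one]
        rw [hxeq]
        refine mul_mem (hall i _) (ih _ rfl ?_)
        intro j hj
        rw [elt_coe_left, Function.mem_mulSupport] at hj
        rcases eq_or_ne j i with rfl | hne
        · rw [Function.update_self] at hj
          exact absurd rfl hj
        · rw [Function.update_of_ne hne] at hj
          have hmem := hsupp (Function.mem_mulSupport.mpr hj)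
          simp only [Finset.coe_insert, Set.mem_insert_iff] at hmem
          rcases hmem with rfl | h'
          · exact absurd rfl hne
          · exact h'
    intro x hx
    have hr : (x : FullWreath K I H).right = 1 := hx
    have hfin : (Function.mulSupport (x : FullWreath K I H).left).Finite := x.2
    exact key hfin.toFinset x hr (by simp)
  -- Step 6: `N = (⊕_I H) ⋊ K₀`.
  refine ⟨hbase_le, Subgroup.map (projK : ↥(RestrictedWreath K I H) →* K) N, ⟨?_⟩, ?_⟩
  · intro k₀ hk₀ k
    obtain ⟨y, hyN, hy⟩ := Subgroup.mem_map.mp hk₀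
    refine Subgroup.mem_map.mpr ⟨elt 1 hone k * y * (elt 1 hone k)⁻¹, hN.conj_mem y hyN _, ?_⟩
    rw [map_mul, map_mul, map_inv, hy]
    rfl
  · intro x
    constructor
    · intro hx
      exact Subgroup.mem_map.mpr ⟨x, hx, rfl⟩
    · intro hx
      obtain ⟨y, hyN, hy⟩ := Subgroup.mem_map.mp hx
      have hb : x * y⁻¹ ∈ baseSubgroup K I H := by
        show ((x * y⁻¹ : ↥(RestrictedWreath K I H)) : FullWreath K I H).right = 1
        rw [coe_mul, SemidirectProduct.mul_right, coe_inv, SemidirectProduct.inv_right, ← hy]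
        simp
      have := mul_mem (hbase_le hb) hyN
      simpa [mul_assoc] using this
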